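/- Let H be a Hilbert space. If a surjective bounded operator T on H is a linear combination of two unitary operators, then T is invertible. -/

import Mathlib

/-- If a surjective bounded operator on a complex Hilbert space is a linear combination of
two unitary operators, then it is invertible. -/
theorem stmt5 {H : Type*} [NormedAddCommGroup H] [InnerProductSpace ℂ H] [CompleteSpace H]
    (T U₁ U₂ : H →L[ℂ] H) (hU₁ : U₁ ∈ unitary (H →L[ℂ] H)) (hU₂ : U₂ ∈ unitary (H →L[ℂ] H))
    (lam mu : ℂ) (hT : T = lam • U₁ + mu • U₂) (hsurj : Function.Surjective T) :
    IsUnit T := by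
  rw [ContinuousLinearMap.isUnit_iff_bijective]
  refine ⟨?_, hsurj⟩
  -- the adjoint of T is injective since T is surjective
  have hadj_inj : Function.Injective (ContinuousLinearMap.adjoint T) := by
    intro y z hyz
    obtain ⟨x, hx⟩ := hsurj (y - z)
    have h0 : inner ℂ (y - z) (y - z) = (0 : ℂ) := by
      conv_lhs => rw [← hx]
      rw [← ContinuousLinearMap.adjoint_inner_left, hx, map_sub, hyz, sub_self,
        inner_zero_left]
    exact sub_eq_zero.mp (inner_self_eq_zero.mp h0)
  have h1 : star U₁ * U₁ = 1 := hU₁.1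
  have h1' : U₁ * star U₁ = 1 := hU₁.2
  have h2 : star U₂ * U₂ = 1 := hU₂.1
  have h2' : U₂ * star U₂ = 1 := hU₂.2
  have e3 : U₁ * (star U₁ * U₂) = U₂ := by rw [← mul_assoc, h1', one_mul]
  have e4 : U₂ * (star U₂ * U₁) = U₁ := by rw [← mul_assoc, h2', one_mul]
  -- key algebraic identity: T T* U₁ = U₁ T* T
  have key : T * star T * U₁ = U₁ * (star T * T) := by
    rw [hT]
    simp only [star_add, star_smul, mul_add, add_mul, smul_mul_assoc, mul_smul_comm,
      smul_smul, mul_assoc, h1, h2, mul_one, e3, e4]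
    module
  -- injectivity of T
  intro a b hab
  have hx : T (a - b) = 0 := by rw [map_sub, hab, sub_self]
  have h6 : T ((star T) (U₁ (a - b))) = 0 := by
    have := congrArg (fun S : H →L[ℂ] H => S (a - b)) key
    simpa [ContinuousLinearMap.mul_apply, hx] using this
  have hadj : star T = ContinuousLinearMap.adjoint T := ContinuousLinearMap.star_eq_adjoint T
  rw [hadj] at h6
  set w := ContinuousLinearMap.adjoint T (U₁ (a - b)) with hw
  have hw0 : w = 0 := by
    have : inner ℂ w w = (0 : ℂ) := by
      rw [hw]
      nth_rewrite 1 [ContinuousLinearMap.adjoint_inner_left]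
      rw [← hw, h6, inner_zero_right]
    exact inner_self_eq_zero.mp this
  have hU₁x : U₁ (a - b) = 0 := by
    have h7 : ContinuousLinearMap.adjoint T (U₁ (a - b)) = ContinuousLinearMap.adjoint T 0 := by
      rw [← hw, hw0, map_zero]
    exact hadj_inj h7
  have : a - b = 0 := by
    have := congrArg (fun S : H →L[ℂ] H => S (a - b)) h1
    simp only [ContinuousLinearMap.mul_apply, ContinuousLinearMap.one_apply] at this
    rw [← this, hU₁x, map_zero]
  exact sub_eq_zero.mp this
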